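/- Let ξ be a skew-Hermitian operator on a finite-dimensional complex inner product space V, and let μ(v) := (1/2)ω(ξv, v) + ⟨θ,ξ⟩ where ω = Im h and θ ∈ ℝ is a constant. Then the function t ↦ ⟨μ(exp(√(-1)tξ)v), ξ⟩ is non-decreasing in t, and in fact its derivative equals ‖ξ_{v(t)}‖² ≥ 0 where v(t) = exp(√(-1)tξ)v. -/

import Mathlib

/-!
STATEMENT 2: For a skew-Hermitian operator `ξ` on a finite-dimensional complex
inner product space `V`, with `ω = Im h` and
`μ_ξ(v) := (1/2) ω (ξ v) v + θ`, the function
`t ↦ μ_ξ (exp (√-1 t ξ) v)` has derivative `‖ξ (v t)‖²` (the squared norm of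
the fundamental vector field at `v t = exp(√-1 t ξ) v`), which is `≥ 0`; in
particular the function is non-decreasing (monotone).
-/

open scoped InnerProductSpace

theorem statement2
    (V : Type*) [NormedAddCommGroup V] [InnerProductSpace ℂ V] [FiniteDimensional ℂ V]
    (ξ : V →L[ℂ] V)
    -- ξ is skew-Hermitian:
    (hskew : ∀ x y : V, ⟪ξ x, y⟫_ℂ = - ⟪x, ξ y⟫_ℂ)
    (θ : ℝ) (v : V)
    -- ω = Im h :
    (ω : V → V → ℝ) (hω : ∀ x y, ω x y = (⟪x, y⟫_ℂ).im)
    -- the flow v(t) = exp(√-1 t ξ) v :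
    (flow : ℝ → V)
    (hflow : ∀ t : ℝ, flow t = NormedSpace.exp ((t : ℂ) • (Complex.I • ξ)) v)
    -- μ evaluated at ξ along the flow:
    (f : ℝ → ℝ) (hf : ∀ t, f t = (1/2 : ℝ) * ω (ξ (flow t)) (flow t) + θ) :
    (∀ t : ℝ, HasDerivAt f (‖ξ (flow t)‖ ^ 2) t)
    ∧ (∀ t : ℝ, 0 ≤ ‖ξ (flow t)‖ ^ 2)
    ∧ Monotone f := by
  set B : V →L[ℂ] V := Complex.I • ξ with hB
  -- flow t = exp ℝ (t • B) v
  have hflow' : ∀ t : ℝ, flow t = NormedSpace.exp (t • B) v := by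
    intro t
    rw [hflow t]
    rw [Complex.coe_smul]
  have hderiv : ∀ t : ℝ, HasDerivAt flow (Complex.I • ξ (flow t)) t := by
    intro t
    have h1 : HasDerivAt (fun u : ℝ => NormedSpace.exp (u • B))
        (NormedSpace.exp (t • B) * B) t := hasDerivAt_exp_smul_const B t
    have h2 := ((((ContinuousLinearMap.apply ℂ V v).restrictScalars ℝ)).hasFDerivAt.comp_hasDerivAt t h1)
    have hcomm : NormedSpace.exp (t • B) * B = B * NormedSpace.exp (t • B) :=
      (((Commute.refl B).smul_left t).exp_left).eq
    have : HasDerivAt (fun u : ℝ => NormedSpace.exp (u • B) v)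
        ((NormedSpace.exp (t • B) * B) v) t := h2
    rw [hcomm] at this
    have heq : (B * NormedSpace.exp (t • B)) v = Complex.I • ξ (flow t) := by
      rw [ContinuousLinearMap.mul_apply, ← hflow' t, hB]
      simp
    rw [heq] at this
    exact this.congr_of_eventuallyEq
      (Filter.Eventually.of_forall fun u => hflow' u)
  have key : ∀ t : ℝ, HasDerivAt f (‖ξ (flow t)‖ ^ 2) t := by
    intro t
    set w := flow t with hw
    have hd := hderiv t
    have hξd : HasDerivAt (fun u => ξ (flow u)) (ξ (Complex.I • ξ w)) t :=
      (ξ.restrictScalars ℝ).hasFDerivAt.comp_hasDerivAt t hd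
    have hin := hξd.inner ℂ hd
    have him := Complex.imCLM.hasFDerivAt.comp_hasDerivAt t hin
    have hfinal := (him.const_mul (1/2 : ℝ)).add_const θ
    have hfinal2 : HasDerivAt f
        ((1/2 : ℝ) * Complex.imCLM (⟪ξ w, Complex.I • ξ w⟫_ℂ + ⟪ξ (Complex.I • ξ w), w⟫_ℂ)) t :=
      hfinal.congr_of_eventuallyEq (Filter.Eventually.of_forall fun u => by
        rw [hf u, hω]; rfl)
    have hval : (1/2 : ℝ) * Complex.imCLM (⟪ξ w, Complex.I • ξ w⟫_ℂ + ⟪ξ (Complex.I • ξ w), w⟫_ℂ)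
        = ‖ξ w‖ ^ 2 := by
      have h1 : ⟪ξ w, ξ w⟫_ℂ = ((‖ξ w‖ ^ 2 : ℝ) : ℂ) := by
        rw [inner_self_eq_norm_sq_to_K]; norm_num
      rw [map_smul ξ, inner_smul_right, inner_smul_left, hskew (ξ w) w, h1]
      simp [Complex.conj_I]
      norm_cast
      ring
    rw [hval] at hfinal2
    exact hfinal2
  refine ⟨key, fun t => by positivity, ?_⟩
  apply monotone_of_deriv_nonneg (fun t => (key t).differentiableAt)
  intro t
  rw [(key t).deriv]
  positivity
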